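/- For bases A, B of a matroid M on a linearly ordered set E, the following are equivalent: (1) IP(A) ∩ EP(B) = ∅; (2) (A \ IA(A)) ∪ EA(A) ⊆ (B \ IA(B)) ∪ EA(B); (3) IP(A) ∪ EA(A) ⊆ IP(B) ∪ EA(B). (This common condition defines the external/internal order A ≤_{ext/int} B on bases.) -/

import Mathlib

open Set

variable {α : Type*}

/-- A circuit of a matroid: a minimal dependent set. -/
def Matroid.Cct (M : Matroid α) (C : Set α) : Prop :=
  M.Dep C ∧ ∀ D ⊂ C, ¬ M.Dep D

/-- The externally active elements with respect to `S`: elements `e ∈ E \ S` that are the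
maximum of some circuit contained in `S ∪ {e}`. -/
def Matroid.exA [LinearOrder α] (M : Matroid α) (S : Set α) : Set α :=
  {e | e ∈ M.E \ S ∧ ∃ C, M.Cct C ∧ C ⊆ insert e S ∧ ∀ f ∈ C, f ≤ e}

/-- The externally passive elements with respect to `S`. -/
def Matroid.exP [LinearOrder α] (M : Matroid α) (S : Set α) : Set α :=
  (M.E \ S) \ M.exA S

/-- The internally active elements with respect to `S`: elements of `S` that are externally
active with respect to `E \ S` in the dual matroid. -/
def Matroid.inA [LinearOrder α] (M : Matroid α) (S : Set α) : Set α :=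
  {i | i ∈ S ∧ i ∈ M✶.exA (M.E \ S)}

/-- The internally passive elements with respect to `S`. -/
def Matroid.inP [LinearOrder α] (M : Matroid α) (S : Set α) : Set α :=
  S \ M.inA S

/-- `I` is internally related to the basis `B` if `I = B \ Y` for some `Y ⊆ IA(B)`. -/
def Matroid.IntRelated [LinearOrder α] (M : Matroid α) (I B : Set α) : Prop :=
  M.IsBase B ∧ ∃ Y ⊆ M.inA B, I = B \ Y

/-- The external/internal order on independent sets. -/
def Matroid.extIntLE [LinearOrder α] (M : Matroid α) (I J : Set α) : Prop :=
  ((∃ B, M.IntRelated I B ∧ M.IntRelated J B) ∧ I ⊆ J) ∨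
  ((¬ ∃ B, M.IntRelated I B ∧ M.IntRelated J B) ∧
    (I \ M.inA I) ∪ M.exA I ⊆ (J \ M.inA J) ∪ M.exA J)

namespace Matroid

variable {M : Matroid α}

/-- Every dependent set in a finite matroid contains a circuit. -/
lemma exists_cct_subset [M.Finite] {X : Set α} (hX : M.Dep X) : ∃ C ⊆ X, M.Cct C := by
  obtain ⟨n, hn⟩ : ∃ n, X.ncard = n := ⟨_, rfl⟩
  induction n using Nat.strong_induction_on generalizing X with
  | _ n ih =>
    by_cases h : ∀ D ⊂ X, ¬ M.Dep D
    · exact ⟨X, Subset.rfl, hX, h⟩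
    · push_neg at h
      obtain ⟨D, hDX, hD⟩ := h
      have hfin : X.Finite := M.set_finite X hX.subset_ground
      have hlt : D.ncard < n := hn ▸ Set.ncard_lt_ncard hDX hfin
      obtain ⟨C, hCD, hC⟩ := ih D.ncard hlt hD rfl
      exact ⟨C, hCD.trans hDX.subset, hC⟩

lemma Cct.mem_closure_diff {C : Set α} {y : α} (hC : M.Cct C) (hy : y ∈ C) :
    y ∈ M.closure (C \ {y}) := by
  have hIndep : M.Indep (C \ {y}) := by
    rw [← not_dep_iff (diff_subset.trans hC.1.subset_ground)]
    exact hC.2 _ (sdiff_singleton_ssubset.mpr hy)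
  have hdep : M.Dep (insert y (C \ {y})) := by
    rw [insert_diff_singleton, insert_eq_of_mem hy]
    exact hC.1
  exact (hIndep.insert_dep_iff.mp hdep).1

/-- From a point in the closure of an independent set, extract a circuit through it. -/
lemma exists_cct_insert [M.Finite] {I : Set α} {e : α}
    (hI : M.Indep I) (he : e ∈ M.closure I) (heI : e ∉ I) :
    ∃ C, M.Cct C ∧ C ⊆ insert e I ∧ e ∈ C := by
  have hdep : M.Dep (insert e I) := hI.insert_dep_iff.mpr ⟨he, heI⟩
  obtain ⟨C, hCs, hC⟩ := exists_cct_subset hdep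
  have heC : e ∈ C := by
    by_contra h
    refine hC.1.not_indep (hI.subset fun z hz => ?_)
    rcases mem_insert_iff.mp (hCs hz) with rfl | hzI
    · exact absurd hz h
    · exact hzI
  exact ⟨C, hC, hCs, heC⟩

/-- A circuit and a cocircuit cannot intersect in exactly one element. -/
lemma cct_inter_dual_cct_ne_singleton [M.Finite] {C D : Set α} {y : α}
    (hC : M.Cct C) (hD : M✶.Cct D) (h : C ∩ D = {y}) : False := by
  have hyCD : y ∈ C ∩ D := h ▸ rfl
  have hyC : y ∈ C := hyCD.1
  have hyD : y ∈ D := hyCD.2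
  have hDE : D ⊆ M.E := hD.1.subset_ground
  have hDindep : M✶.Indep (D \ {y}) := by
    rw [← not_dep_iff (M := M✶) (diff_subset.trans hDE)]
    exact hD.2 _ (sdiff_singleton_ssubset.mpr hyD)
  obtain ⟨-, B0, hB0, hdisj⟩ := dual_indep_iff_exists'.mp hDindep
  have hDnotindep : ¬ M✶.Indep D := hD.1.not_indep
  have hyB0 : y ∈ B0 := by
    by_contra hyB0
    refine hDnotindep (dual_indep_iff_exists'.mpr
      ⟨hDE, B0, hB0, disjoint_left.mpr fun z hzD hzB => ?_⟩)
    rcases eq_or_ne z y with rfl | hzy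
    · exact hyB0 hzB
    · exact disjoint_left.mp hdisj ⟨hzD, hzy⟩ hzB
  set S := (B0 \ {y}) ∪ (C \ {y}) with hSdef
  have hSE : S ⊆ M.E :=
    union_subset (diff_subset.trans hB0.subset_ground) (diff_subset.trans hC.1.subset_ground)
  have hyclS : y ∈ M.closure S :=
    M.closure_subset_closure subset_union_right (hC.mem_closure_diff hyC)
  have hB0cl : B0 ⊆ M.closure S := by
    intro z hz
    rcases eq_or_ne z y with rfl | hzy
    · exact hyclS
    · exact M.subset_closure S hSE (Or.inl ⟨hz, hzy⟩)
  have hsp : M.Spanning S := by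
    rw [spanning_iff_closure_eq hSE]
    refine (M.closure_subset_ground S).antisymm ?_
    rw [← hB0.closure_eq]
    exact M.closure_subset_closure_of_subset_closure hB0cl
  obtain ⟨B1, hB1, hB1S⟩ := hsp.exists_isBase_subset
  have hSD : Disjoint S D := by
    rw [disjoint_left]
    rintro z (⟨hzB, hzy⟩ | ⟨hzC, hzy⟩) hzD
    · exact disjoint_left.mp hdisj ⟨hzD, hzy⟩ hzB
    · exact hzy (h ▸ (⟨hzC, hzD⟩ : z ∈ C ∩ D))
  exact hDnotindep (dual_indep_iff_exists'.mpr ⟨hDE, B1, hB1, (hSD.mono_left hB1S).symm⟩)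

lemma mem_exA_iff [LinearOrder α] [M.Finite] {X : Set α} {e : α} (hX : M.IsBase X) :
    e ∈ M.exA X ↔ e ∈ M.E \ X ∧ e ∈ M.closure (X ∩ Iio e) := by
  constructor
  · rintro ⟨heEX, C, hC, hCs, hmax⟩
    refine ⟨heEX, ?_⟩
    have heC : e ∈ C := by
      by_contra h
      refine hC.1.not_indep (hX.indep.subset fun z hz => ?_)
      rcases mem_insert_iff.mp (hCs hz) with rfl | hzX
      · exact absurd hz h
      · exact hzX
    have hsub : C \ {e} ⊆ X ∩ Iio e := by
      rintro z ⟨hzC, hz⟩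
      have hzne : z ≠ e := hz
      rcases mem_insert_iff.mp (hCs hzC) with rfl | hzX
      · exact absurd rfl hzne
      · exact ⟨hzX, lt_of_le_of_ne (hmax z hzC) hzne⟩
    exact M.closure_subset_closure hsub (hC.mem_closure_diff heC)
  · rintro ⟨⟨heE, heX⟩, hecl⟩
    have hI : M.Indep (X ∩ Iio e) := hX.indep.subset inter_subset_left
    obtain ⟨C, hC, hCs, heC⟩ := exists_cct_insert hI hecl (fun h => heX h.1)
    refine ⟨⟨heE, heX⟩, C, hC, hCs.trans (insert_subset_insert inter_subset_left), ?_⟩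
    intro f hf
    rcases mem_insert_iff.mp (hCs hf) with rfl | hfI
    · exact le_rfl
    · exact hfI.2.le

lemma mem_inA_iff [LinearOrder α] [M.Finite] {X : Set α} {i : α} (hX : M.IsBase X) :
    i ∈ M.inA X ↔ i ∈ X ∧ i ∈ M✶.closure ((M.E \ X) ∩ Iio i) := by
  have hdual : M✶.IsBase (M.E \ X) := hX.compl_isBase_dual
  unfold Matroid.inA
  simp only [mem_setOf_eq, mem_exA_iff hdual, dual_ground]
  constructor
  · rintro ⟨hiX, _, hcl⟩
    exact ⟨hiX, hcl⟩
  · rintro ⟨hiX, hcl⟩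
    exact ⟨hiX, ⟨hX.subset_ground hiX, fun h => h.2 hiX⟩, hcl⟩

lemma passive_aux [LinearOrder α] [M.Finite] {A C : Set α} {x y : α}
    (hA : M.IsBase A) (hC : M.Cct C) (hCs : C ⊆ insert x A) (hx : x ∉ A)
    (hy : y ∈ C) (hyx : y < x) : y ∉ M.inA A := by
  intro hin
  have hyA : y ∈ A := by
    rcases mem_insert_iff.mp (hCs hy) with rfl | h
    · exact absurd hyx (lt_irrefl _)
    · exact h
  obtain ⟨-, hycl⟩ := (mem_inA_iff hA).mp hin
  have hIdual : M✶.Indep ((M.E \ A) ∩ Iio y) := hA.compl_isBase_dual.indep.subset inter_subset_left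
  have hyI : y ∉ (M.E \ A) ∩ Iio y := fun h => h.1.2 hyA
  obtain ⟨D, hD, hDs, hyD⟩ := exists_cct_insert hIdual hycl hyI
  refine cct_inter_dual_cct_ne_singleton (y := y) hC hD (Subset.antisymm ?_ ?_)
  · rintro z ⟨hzC, hzD⟩
    by_contra hzy
    have hzne : z ≠ y := hzy
    rcases mem_insert_iff.mp (hDs hzD) with rfl | hz'
    · exact hzne rfl
    · rcases mem_insert_iff.mp (hCs hzC) with rfl | hzA
      · exact absurd hz'.2 (not_lt.mpr hyx.le)
      · exact hz'.1.2 hzA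
  · exact singleton_subset_iff.mpr ⟨hy, hyD⟩

lemma copassive_aux [LinearOrder α] [M.Finite] {B D : Set α} {x y : α}
    (hB : M.IsBase B) (hD : M✶.Cct D) (hDs : D ⊆ insert x (M.E \ B)) (hx : x ∈ B)
    (hy : y ∈ D) (hyx : y < x) : y ∉ M.exA B := by
  intro hex
  have hyB : y ∉ B := by
    rcases mem_insert_iff.mp (hDs hy) with rfl | h
    · exact absurd hyx (lt_irrefl _)
    · exact h.2
  obtain ⟨-, hycl⟩ := (mem_exA_iff hB).mp hex
  have hI : M.Indep (B ∩ Iio y) := hB.indep.subset inter_subset_left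
  have hyI : y ∉ B ∩ Iio y := fun h => hyB h.1
  obtain ⟨C, hC, hCs, hyC⟩ := exists_cct_insert hI hycl hyI
  refine cct_inter_dual_cct_ne_singleton (y := y) hC hD (Subset.antisymm ?_ ?_)
  · rintro z ⟨hzC, hzD⟩
    by_contra hzy
    have hzne : z ≠ y := hzy
    rcases mem_insert_iff.mp (hCs hzC) with rfl | hz'
    · exact hzne rfl
    · rcases mem_insert_iff.mp (hDs hzD) with rfl | hzB
      · exact absurd hz'.2 (not_lt.mpr hyx.le)
      · exact hzB.2 hz'.1
  · exact singleton_subset_iff.mpr ⟨hyC, hy⟩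

section Keys

variable [LinearOrder α] [M.Finite] {A B : Set α}

/-- Case (c): externally active in `A`, outside `B` implies externally active in `B`. -/
lemma key_exA_exA (hA : M.IsBase A) (hB : M.IsBase B)
    (hH : ∀ z, z ∈ M.inP A → z ∉ M.exP B) {x : α}
    (hx : x ∈ M.exA A) (hxB : x ∉ B) : x ∈ M.exA B := by
  obtain ⟨⟨hxE, hxA⟩, hxcl⟩ := (mem_exA_iff hA).mp hx
  have hI : M.Indep (A ∩ Iio x) := hA.indep.subset inter_subset_left
  obtain ⟨C, hC, hCs, hxC⟩ := exists_cct_insert hI hxcl (fun h => hxA h.1)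
  rw [mem_exA_iff hB]
  refine ⟨⟨hxE, hxB⟩, ?_⟩
  have hsub : C \ {x} ⊆ M.closure (B ∩ Iio x) := by
    rintro y ⟨hyC, hyne⟩
    have hyne' : y ≠ x := hyne
    have hy' : y ∈ A ∩ Iio x := (mem_insert_iff.mp (hCs hyC)).resolve_left hyne'
    have hyinP : y ∈ M.inP A :=
      ⟨hy'.1, passive_aux hA hC
        (hCs.trans (insert_subset_insert inter_subset_left)) hxA hyC hy'.2⟩
    by_cases hyB : y ∈ B
    · exact M.subset_closure _ (inter_subset_left.trans hB.subset_ground) ⟨hyB, hy'.2⟩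
    · have hyexA : y ∈ M.exA B := by
        by_contra hyex
        exact hH y hyinP ⟨⟨hA.subset_ground hy'.1, hyB⟩, hyex⟩
      obtain ⟨-, hycl⟩ := (mem_exA_iff hB).mp hyexA
      exact M.closure_subset_closure
        (inter_subset_inter_right _ (Iio_subset_Iio hy'.2.le)) hycl
  exact M.closure_subset_closure_of_subset_closure hsub (hC.mem_closure_diff hxC)

/-- Case (b): externally active in `A`, inside `B` implies not internally active in `B`. -/
lemma key_exA_inA (hA : M.IsBase A) (hB : M.IsBase B)
    (hH : ∀ z, z ∈ M.inP A → z ∉ M.exP B) {x : α}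
    (hx : x ∈ M.exA A) (hxB : x ∈ B) : x ∉ M.inA B := by
  intro hin
  obtain ⟨⟨hxE, hxA⟩, hxcl⟩ := (mem_exA_iff hA).mp hx
  have hI : M.Indep (A ∩ Iio x) := hA.indep.subset inter_subset_left
  obtain ⟨C, hC, hCs, hxC⟩ := exists_cct_insert hI hxcl (fun h => hxA h.1)
  obtain ⟨-, hxcl'⟩ := (mem_inA_iff hB).mp hin
  have hIdual : M✶.Indep ((M.E \ B) ∩ Iio x) := hB.compl_isBase_dual.indep.subset inter_subset_left
  obtain ⟨D, hD, hDs, hxD⟩ := exists_cct_insert hIdual hxcl' (fun h => h.1.2 hxB)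
  have hne : C ∩ D ≠ {x} := fun h => cct_inter_dual_cct_ne_singleton hC hD h
  have hsub : {x} ⊆ C ∩ D := singleton_subset_iff.mpr ⟨hxC, hxD⟩
  obtain ⟨z, hzCD, hzx⟩ : ∃ z ∈ C ∩ D, z ≠ x := by
    by_contra h
    push_neg at h
    exact hne (Subset.antisymm (fun z hz => h z hz) hsub)
  have hzC' : z ∈ A ∩ Iio x := (mem_insert_iff.mp (hCs hzCD.1)).resolve_left hzx
  have hzD' : z ∈ (M.E \ B) ∩ Iio x := (mem_insert_iff.mp (hDs hzCD.2)).resolve_left hzx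
  have hzinP : z ∈ M.inP A :=
    ⟨hzC'.1, passive_aux hA hC (hCs.trans (insert_subset_insert inter_subset_left))
      hxA hzCD.1 hzC'.2⟩
  have hzexP : z ∈ M.exP B :=
    ⟨hzD'.1, copassive_aux hB hD (hDs.trans (insert_subset_insert inter_subset_left))
      hxB hzCD.2 hzD'.2⟩
  exact hH z hzinP hzexP

/-- Case (a): internally passive in `A`, inside `B` implies not internally active in `B`. -/
lemma key_inP_inA (hA : M.IsBase A) (hB : M.IsBase B)
    (hH : ∀ z, z ∈ M.inP A → z ∉ M.exP B) {x : α}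
    (hx : x ∈ M.inP A) (hxB : x ∈ B) : x ∉ M.inA B := by
  intro hin
  obtain ⟨hxA, hxnIA⟩ := hx
  obtain ⟨-, hxcl⟩ := (mem_inA_iff hB).mp hin
  have hIdual : M✶.Indep ((M.E \ B) ∩ Iio x) := hB.compl_isBase_dual.indep.subset inter_subset_left
  obtain ⟨D, hD, hDs, hxD⟩ := exists_cct_insert hIdual hxcl (fun h => h.1.2 hxB)
  have hsub : D \ {x} ⊆ M✶.closure ((M.E \ A) ∩ Iio x) := by
    rintro y ⟨hyD, hyne⟩
    have hyne' : y ≠ x := hyne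
    have hy' : y ∈ (M.E \ B) ∩ Iio x := (mem_insert_iff.mp (hDs hyD)).resolve_left hyne'
    have hynexA : y ∉ M.exA B :=
      copassive_aux hB hD (hDs.trans (insert_subset_insert inter_subset_left)) hxB hyD hy'.2
    have hyexP : y ∈ M.exP B := ⟨hy'.1, hynexA⟩
    have hyninP : y ∉ M.inP A := fun h => hH y h hyexP
    by_cases hyA : y ∈ A
    · have hyinA : y ∈ M.inA A := by
        by_contra h
        exact hyninP ⟨hyA, h⟩
      obtain ⟨-, hycl⟩ := (mem_inA_iff hA).mp hyinA
      exact M✶.closure_subset_closure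
        (inter_subset_inter_right _ (Iio_subset_Iio hy'.2.le)) hycl
    · exact M✶.subset_closure _
        (inter_subset_left.trans diff_subset) ⟨⟨hy'.1.1, hyA⟩, hy'.2⟩
  have hxcl2 : x ∈ M✶.closure ((M.E \ A) ∩ Iio x) :=
    M✶.closure_subset_closure_of_subset_closure hsub (hD.mem_closure_diff hxD)
  exact hxnIA ((mem_inA_iff hA).mpr ⟨hxA, hxcl2⟩)

end Keys

end Matroid

/-- The three equivalent conditions defining Las Vergnas's external/internal order on bases. -/
theorem ext_int_order_tfae [LinearOrder α] (M : Matroid α) [M.Finite]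
    (A B : Set α) (hA : M.IsBase A) (hB : M.IsBase B) :
    (M.inP A ∩ M.exP B = ∅ ↔
      (A \ M.inA A) ∪ M.exA A ⊆ (B \ M.inA B) ∪ M.exA B) ∧
    (M.inP A ∩ M.exP B = ∅ ↔
      M.inP A ∪ M.exA A ⊆ M.inP B ∪ M.exA B) := by
  have main : M.inP A ∩ M.exP B = ∅ ↔ M.inP A ∪ M.exA A ⊆ M.inP B ∪ M.exA B := by
    constructor
    · intro hP
      have hH : ∀ z, z ∈ M.inP A → z ∉ M.exP B := fun z h1 h2 =>
        eq_empty_iff_forall_notMem.mp hP z ⟨h1, h2⟩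
      rintro x (hx | hx)
      · by_cases hxB : x ∈ B
        · exact Or.inl ⟨hxB, Matroid.key_inP_inA hA hB hH hx hxB⟩
        · right
          have hxE : x ∈ M.E := hA.subset_ground hx.1
          by_contra hxex
          exact hH x hx ⟨⟨hxE, hxB⟩, hxex⟩
      · by_cases hxB : x ∈ B
        · exact Or.inl ⟨hxB, Matroid.key_exA_inA hA hB hH hx hxB⟩
        · exact Or.inr (Matroid.key_exA_exA hA hB hH hx hxB)
    · intro hQ
      rw [eq_empty_iff_forall_notMem]
      rintro x ⟨hx1, hx2⟩
      rcases hQ (Or.inl hx1) with h | h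
      · exact hx2.1.2 h.1
      · exact hx2.2 h
  exact ⟨main, main⟩
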